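/- Let c, z ∈ ℝ^d with ‖z − c‖ ≤ 1. Then z does not belong to the convex hull of the set B(c, 1) \ B(z, 1), i.e., z is not a convex combination of points that lie in the closed unit ball around c but at distance greater than 1 from z. -/

import Mathlib

theorem stmt13 (d : ℕ) (c z : EuclideanSpace ℝ (Fin d)) (hz : ‖z - c‖ ≤ 1) :
    z ∉ convexHull ℝ (Metric.closedBall c 1 \ Metric.closedBall z 1) := by
  intro hmem
  have hsub : Metric.closedBall c 1 \ Metric.closedBall z 1 ⊆
      {x | (inner ℝ (z - c) x : ℝ) < inner ℝ (z - c) z} := by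
    rintro x ⟨hx1, hx2⟩
    simp only [Metric.mem_closedBall, dist_eq_norm, not_le] at hx1 hx2
    have hdec : x - c = (x - z) + (z - c) := by abel
    have hsq : ‖x - c‖ ^ 2 = ‖x - z‖ ^ 2 + 2 * inner ℝ (x - z) (z - c) + ‖z - c‖ ^ 2 := by
      rw [hdec]; exact norm_add_sq_real _ _
    have h1 : ‖x - c‖ ^ 2 ≤ 1 := by nlinarith [norm_nonneg (x - c)]
    have h2 : 1 < ‖x - z‖ ^ 2 := by nlinarith [norm_nonneg (x - z)]
    have h3 : (0:ℝ) ≤ ‖z - c‖ ^ 2 := by positivity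
    have hkey : (inner ℝ (x - z) (z - c) : ℝ) < 0 := by nlinarith
    have : (inner ℝ (z - c) x : ℝ) - inner ℝ (z - c) z = inner ℝ (x - z) (z - c) := by
      rw [← inner_sub_right, real_inner_comm]
    simp only [Set.mem_setOf_eq]
    linarith
  have hconv := convexHull_min hsub
    (convex_halfSpace_lt ⟨fun a b => inner_add_right _ a b,
      fun r a => real_inner_smul_right _ _ r⟩ _)
  have := hconv hmem
  simp at this
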